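/- Let A and B be finite sets of integers with A, B ≠ {0}, such that A ⊕ B is a complete set of residues modulo n = (#A)(#B). Then either no element of the difference set A − A is relatively prime to #B, or no element of B − B is relatively prime to #A. -/

import Mathlib

open Finset MulAction

private def GoodUV (A B : Finset ℤ) (n : ℕ) (u v : ℤ) : Prop :=
  ∀ z : ZMod n, ∃! q : ℤ × ℤ, q.1 ∈ A ∧ q.2 ∈ B ∧ ((u * q.1 + v * q.2 : ℤ) : ZMod n) = z

private lemma GoodUV.swap {A B : Finset ℤ} {n : ℕ} {u v : ℤ} (h : GoodUV A B n u v) :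
    GoodUV B A n v u := by
  intro z
  obtain ⟨⟨a, b⟩, ⟨ha, hb, hz⟩, huniq⟩ := h z
  refine ⟨(b, a), ⟨hb, ha, by rw [add_comm]; exact hz⟩, ?_⟩
  rintro ⟨b', a'⟩ ⟨hb', ha', hz'⟩
  have := huniq (a', b') ⟨ha', hb', by rw [add_comm]; exact hz'⟩
  simp only [Prod.mk.injEq] at this ⊢
  exact ⟨this.2, this.1⟩

private def rotAct (p : ℕ) (S : Finset ((ZMod p → ℤ) × ℤ))
    (hS : ∀ (c : ZMod p) (q : (ZMod p → ℤ) × ℤ), q ∈ S → ((fun i => q.1 (i + c)), q.2) ∈ S) :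
    MulAction (Multiplicative (ZMod p)) {x // x ∈ S} where
  smul c x := ⟨((fun i => x.1.1 (i + c.toAdd)), x.1.2), hS c.toAdd x.1 x.2⟩
  one_smul x := Subtype.ext (Prod.ext (funext fun i => by
    show x.1.1 (i + (1 : Multiplicative (ZMod p)).toAdd) = x.1.1 i
    rw [toAdd_one, add_zero]) rfl)
  mul_smul c c' x := Subtype.ext (Prod.ext (funext fun i => by
    show x.1.1 (i + (c * c').toAdd) = x.1.1 (i + c.toAdd + c'.toAdd)
    rw [toAdd_mul]; ring_nf) rfl)

private lemma GoodUV.step {A B : Finset ℤ} {n : ℕ} (hn : n = A.card * B.card) (hn0 : 0 < n)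
    {u v : ℤ} (h : GoodUV A B n u v) {p : ℕ} (hp : p.Prime) (hpm : ¬ p ∣ A.card) :
    GoodUV A B n ((p : ℤ) * u) v := by
  classical
  haveI : NeZero n := ⟨hn0.ne'⟩
  haveI : NeZero p := ⟨hp.pos.ne'⟩
  haveI hfp : Fact p.Prime := ⟨hp⟩
  have hp2 := hp.two_le
  set m := A.card with hm
  set Nz : ZMod n → Finset (ℤ × ℤ) :=
    fun z => (A ×ˢ B).filter (fun q => (((p : ℤ) * u * q.1 + v * q.2 : ℤ) : ZMod n) = z) with hNz
  -- index juggling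
  set emb : Fin (p - 1) → ZMod p := fun j => (((j : ℕ) + 1 : ℕ) : ZMod p) with hemb
  have hembval : ∀ j : Fin (p - 1), (emb j).val = (j : ℕ) + 1 := by
    intro j
    have hlt : (j : ℕ) + 1 < p := by have := j.2; omega
    rw [hemb]; exact ZMod.val_natCast_of_lt hlt
  have hembne : ∀ j, emb j ≠ 0 := by
    intro j hj
    have := hembval j
    rw [hj, ZMod.val_zero] at this
    omega
  set invemb : ZMod p → Fin (p - 1) :=
    fun i => ⟨i.val - 1, by have := ZMod.val_lt i; omega⟩ with hinv
  have hinvemb : ∀ j, invemb (emb j) = j := by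
    intro j; apply Fin.ext; simp [hinv, hembval j]
  have hembinv : ∀ i : ZMod p, i ≠ 0 → emb (invemb i) = i := by
    intro i hi
    have hv : i.val ≠ 0 := fun hh => hi ((ZMod.val_eq_zero i).mp hh)
    have : ((invemb i : Fin (p-1)) : ℕ) + 1 = i.val := by simp [hinv]; omega
    rw [hemb]; simp only [this]; exact ZMod.natCast_zmod_val i
  -- sum splitting
  have sumsplit : ∀ f : ZMod p → ℤ,
      (∑ i, u * f i) = u * f 0 + ∑ j : Fin (p - 1), u * f (emb j) := by
    intro f
    rw [← Finset.add_sum_erase Finset.univ (fun i => u * f i) (Finset.mem_univ (0 : ZMod p))]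
    congr 1
    refine Finset.sum_nbij' (i := invemb) (j := emb) ?_ ?_ ?_ ?_ ?_
    · intro i _; exact Finset.mem_univ _
    · intro j _; exact Finset.mem_erase.2 ⟨hembne j, Finset.mem_univ _⟩
    · intro i hi; exact hembinv i (Finset.mem_erase.1 hi).1
    · intro j _; exact hinvemb j
    · intro i hi; rw [hembinv i (Finset.mem_erase.1 hi).1]
  have key : ∀ z : ZMod n, (Nz z).card ≡ m ^ (p - 1) [MOD p] := by
    intro z
    set S : Finset ((ZMod p → ℤ) × ℤ) :=
      ((Fintype.piFinset fun _ : ZMod p => A) ×ˢ B).filter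
        (fun q => (((∑ i, u * q.1 i) + v * q.2 : ℤ) : ZMod n) = z) with hS
    have memS : ∀ q : (ZMod p → ℤ) × ℤ, q ∈ S ↔
        (∀ i, q.1 i ∈ A) ∧ q.2 ∈ B ∧ (((∑ i, u * q.1 i) + v * q.2 : ℤ) : ZMod n) = z := by
      intro q
      rw [hS, Finset.mem_filter, Finset.mem_product, Fintype.mem_piFinset]
      tauto
    -- part (a): S.card = m ^ (p-1)
    have hmain : ∀ (f : ZMod p → ℤ) (b : ℤ), (((∑ i, u * f i) + v * b : ℤ) : ZMod n) = z →
        ((u * f 0 + v * b : ℤ) : ZMod n)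
          = z - ((∑ j : Fin (p - 1), u * f (emb j) : ℤ) : ZMod n) := by
      intro f b hz
      rw [← hz, sumsplit f]; push_cast; ring
    have cardS : S.card = m ^ (p - 1) := by
      have hT : (Fintype.piFinset fun _ : Fin (p - 1) => A).card = m ^ (p - 1) := by
        rw [Fintype.card_piFinset]; simp [hm]
      rw [← hT]
      apply Finset.card_bij (fun q _ => fun j : Fin (p - 1) => q.1 (emb j))
      · intro q hq
        rw [Fintype.mem_piFinset]
        exact fun j => ((memS q).mp hq).1 (emb j)
      · -- injectivity
        intro q hq q' hq' heq
        obtain ⟨hq1, hq2, hqz⟩ := (memS q).mp hq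
        obtain ⟨hq1', hq2', hqz'⟩ := (memS q').mp hq'
        have hsame : ∀ j, q.1 (emb j) = q'.1 (emb j) := fun j => congrFun heq j
        have h1 := hmain q.1 q.2 hqz
        have h1' := hmain q'.1 q'.2 hqz'
        simp only [hsame] at h1
        obtain ⟨q₀, _, huniq⟩ := h (z - ((∑ j : Fin (p - 1), u * q'.1 (emb j) : ℤ) : ZMod n))
        have e1 := huniq (q.1 0, q.2) ⟨hq1 0, hq2, h1⟩
        have e2 := huniq (q'.1 0, q'.2) ⟨hq1' 0, hq2', h1'⟩
        have e3 : (q.1 0, q.2) = (q'.1 0, q'.2) := e1.trans e2.symm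
        rw [Prod.mk.injEq] at e3
        refine Prod.ext ?_ e3.2
        funext i
        by_cases hi : i = 0
        · rw [hi]; exact e3.1
        · rw [← hembinv i hi]; exact hsame _
      · -- surjectivity
        intro g hg
        rw [Fintype.mem_piFinset] at hg
        obtain ⟨⟨a, b⟩, ⟨ha, hb, hab⟩, _⟩ :=
          h (z - ((∑ j : Fin (p - 1), u * g j : ℤ) : ZMod n))
        have hfg : ∀ j : Fin (p - 1),
            (fun i => if i = 0 then a else g (invemb i)) (emb j) = g j := by
          intro j; simp only; rw [if_neg (hembne j), hinvemb]
        refine ⟨(fun i => if i = 0 then a else g (invemb i), b), ?_, ?_⟩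
        · rw [memS]
          refine ⟨fun i => ?_, hb, ?_⟩
          · by_cases hi : i = 0
            · simp [hi, ha]
            · simp [hi, hg _]
          · have hsum2 : (∑ i : ZMod p, u * (if i = 0 then a else g (invemb i)))
                = u * a + ∑ j : Fin (p - 1), u * g j := by
              rw [sumsplit (fun i => if i = 0 then a else g (invemb i))]
              have e1 : (u * (fun i : ZMod p => if i = 0 then a else g (invemb i)) 0) = u * a := by
                simp
              have e2 : (∑ j : Fin (p - 1),
                  u * (fun i : ZMod p => if i = 0 then a else g (invemb i)) (emb j))
                  = ∑ j : Fin (p - 1), u * g j :=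
                Finset.sum_congr rfl fun j _ => by
                  simp only
                  rw [if_neg (hembne j), hinvemb]
              rw [e1, e2]
            show ((((∑ i : ZMod p, u * (if i = 0 then a else g (invemb i)))) + v * b : ℤ)
              : ZMod n) = z
            rw [hsum2, show ((u * a + ∑ j : Fin (p - 1), u * g j) + v * b : ℤ)
              = (u * a + v * b) + (∑ j : Fin (p - 1), u * g j) from by ring]
            rw [Int.cast_add, hab]
            simp
        · funext j; exact hfg j
    -- part (b): S.card ≡ (Nz z).card mod p
    have hSrot : ∀ (c : ZMod p) (q : (ZMod p → ℤ) × ℤ), q ∈ S →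
        ((fun i => q.1 (i + c)), q.2) ∈ S := by
      intro c q hq
      obtain ⟨hq1, hq2, hqz⟩ := (memS q).mp hq
      rw [memS]
      refine ⟨fun i => hq1 _, hq2, ?_⟩
      have : (∑ i, u * q.1 (i + c)) = ∑ i, u * q.1 i :=
        Fintype.sum_equiv (Equiv.addRight c) _ _ (fun i => rfl)
      rw [this]; exact hqz
    letI := rotAct p S hSrot
    haveI : Fintype (fixedPoints (Multiplicative (ZMod p)) {x // x ∈ S}) := Fintype.ofFinite _
    have hPG : IsPGroup p (Multiplicative (ZMod p)) := by
      apply IsPGroup.of_card (n := 1)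
      simp [Nat.card_eq_fintype_card, ZMod.card]
    have hcong := hPG.card_modEq_card_fixedPoints {x // x ∈ S}
    -- characterize fixed points
    have hconst : ∀ (x : {x // x ∈ S}),
        x ∈ fixedPoints (Multiplicative (ZMod p)) {x // x ∈ S} → ∀ i, x.1.1 i = x.1.1 0 := by
      intro x hx i
      have h1 : x.1.1 (0 + i) = x.1.1 0 := congrFun (congrArg Prod.fst (congrArg Subtype.val
        (MulAction.mem_fixedPoints.mp hx (Multiplicative.ofAdd i)))) 0
      simpa using h1
    have hcardfix : Nat.card (fixedPoints (Multiplicative (ZMod p)) {x // x ∈ S})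
        = (Nz z).card := by
      have hFbij : Function.Bijective
          (fun x : fixedPoints (Multiplicative (ZMod p)) {x // x ∈ S} =>
            (⟨(x.1.1.1 0, x.1.1.2), by
              obtain ⟨hq1, hq2, hqz⟩ := (memS x.1.1).mp x.1.2
              rw [hNz]
              simp only [Finset.mem_filter, Finset.mem_product]
              refine ⟨⟨hq1 0, hq2⟩, ?_⟩
              rw [← hqz]
              congr 1
              have hsum0 : (∑ i, u * x.1.1.1 i) = (p : ℤ) * u * x.1.1.1 0 := by
                rw [Finset.sum_congr rfl (fun i _ => by rw [hconst x.1 x.2 i])]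
                rw [Finset.sum_const, Finset.card_univ, ZMod.card]
                push_cast; ring
              rw [hsum0]⟩ : {q // q ∈ Nz z})) := by
        constructor
        · rintro ⟨x, hx⟩ ⟨y, hy⟩ hxy
          simp only [Subtype.mk.injEq, Prod.mk.injEq] at hxy
          apply Subtype.ext; apply Subtype.ext
          refine Prod.ext ?_ hxy.2
          funext i
          rw [hconst x hx i, hconst y hy i, hxy.1]
        · rintro ⟨⟨a, b⟩, hq⟩
          rw [hNz] at hq
          simp only [Finset.mem_filter, Finset.mem_product] at hq
          have hmem : ((fun _ : ZMod p => a), b) ∈ S := by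
            rw [memS]
            refine ⟨fun _ => hq.1.1, hq.1.2, ?_⟩
            have : (∑ _i : ZMod p, u * a) = (p : ℤ) * u * a := by
              rw [Finset.sum_const, Finset.card_univ, ZMod.card]
              push_cast; ring
            rw [this]; exact hq.2
          have hfix : (⟨((fun _ : ZMod p => a), b), hmem⟩ : {x // x ∈ S}) ∈
              fixedPoints (Multiplicative (ZMod p)) {x // x ∈ S} := by
            intro c
            apply Subtype.ext
            rfl
          exact ⟨⟨⟨((fun _ : ZMod p => a), b), hmem⟩, hfix⟩, rfl⟩
      calc Nat.card (fixedPoints (Multiplicative (ZMod p)) {x // x ∈ S})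
          = Nat.card {q // q ∈ Nz z} := Nat.card_eq_of_bijective _ hFbij
        _ = (Nz z).card := by rw [Nat.card_eq_fintype_card, Fintype.card_coe]
    have hcardS : Nat.card {x // x ∈ S} = S.card := by
      rw [Nat.card_eq_fintype_card, Fintype.card_coe]
    rw [hcardS, hcardfix] at hcong
    exact hcong.symm.trans (by rw [cardS])
  -- Fermat
  have fermat : m ^ (p - 1) ≡ 1 [MOD p] := by
    have hco : Nat.Coprime m p := (Nat.Prime.coprime_iff_not_dvd hp |>.mpr hpm).symm
    have := Nat.ModEq.pow_totient hco
    rwa [Nat.totient_prime hp] at this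
  have hge1 : ∀ z : ZMod n, 1 ≤ (Nz z).card := by
    intro z
    by_contra hc
    have h0 : (Nz z).card = 0 := by omega
    have := (key z).trans fermat
    rw [h0] at this
    have : 0 % p = 1 % p := this
    rw [Nat.zero_mod, Nat.mod_eq_of_lt (by omega)] at this
    omega
  have hsum : (∑ z : ZMod n, (Nz z).card) = n := by
    have hfib := Finset.card_eq_sum_card_fiberwise (s := A ×ˢ B) (t := Finset.univ)
      (f := fun q : ℤ × ℤ => (((p : ℤ) * u * q.1 + v * q.2 : ℤ) : ZMod n))
      (fun x _ => Finset.mem_univ _)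
    rw [Finset.card_product] at hfib
    rw [hNz]
    rw [← hfib, hn]
  have hall1 : ∀ z : ZMod n, (Nz z).card = 1 := by
    by_contra hcon
    push_neg at hcon
    obtain ⟨z₀, hz₀⟩ := hcon
    have hlt : (∑ z : ZMod n, 1) < ∑ z : ZMod n, (Nz z).card := by
      apply Finset.sum_lt_sum (fun z _ => hge1 z)
      exact ⟨z₀, Finset.mem_univ _, by have := hge1 z₀; omega⟩
    rw [hsum] at hlt
    simp only [Finset.sum_const, Finset.card_univ, smul_eq_mul, mul_one, ZMod.card] at hlt
    omega
  intro z
  obtain ⟨q₀, hq₀⟩ := Finset.card_eq_one.mp (hall1 z)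
  have hmemNz : ∀ q : ℤ × ℤ, q ∈ Nz z ↔
      q.1 ∈ A ∧ q.2 ∈ B ∧ (((p : ℤ) * u * q.1 + v * q.2 : ℤ) : ZMod n) = z := by
    intro q
    rw [hNz]
    simp only [Finset.mem_filter, Finset.mem_product]
    tauto
  refine ⟨q₀, ?_, ?_⟩
  · exact (hmemNz q₀).mp (hq₀ ▸ Finset.mem_singleton_self q₀)
  · intro q hq
    have : q ∈ Nz z := (hmemNz q).mpr hq
    rw [hq₀] at this
    exact Finset.mem_singleton.mp this

private lemma GoodUV.mul {A B : Finset ℤ} {n : ℕ} (hn : n = A.card * B.card) (hn0 : 0 < n)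
    {u v : ℤ} (h : GoodUV A B n u v) :
    ∀ t : ℕ, 0 < t → Nat.Coprime t A.card → GoodUV A B n ((t : ℤ) * u) v := by
  intro t
  induction t using Nat.strong_induction_on with
  | _ t ih =>
    intro ht hco
    by_cases h1 : t = 1
    · subst h1; simpa using h
    · have h2 : 2 ≤ t := by omega
      set P := t.minFac with hP
      have hq : P.Prime := Nat.minFac_prime h1
      have hPd : P ∣ t := Nat.minFac_dvd t
      obtain ⟨s, hs⟩ := hPd
      have hq2 := hq.two_le
      have hs0 : 0 < s := by
        rcases Nat.eq_zero_or_pos s with h0 | h0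
        · rw [h0, Nat.mul_zero] at hs; omega
        · exact h0
      have hst : s < t := by
        rw [hs]
        exact lt_of_lt_of_le (by omega : s < 2 * s) (Nat.mul_le_mul_right s hq2)
      have hcos : Nat.Coprime s A.card :=
        Nat.Coprime.coprime_dvd_left ⟨P, hs.trans (Nat.mul_comm _ _)⟩ hco
      have hgs := ih s hst hs0 hcos
      have hqm : ¬ P ∣ A.card := by
        intro hdvd
        have hd : P ∣ Nat.gcd t A.card := Nat.dvd_gcd (Nat.minFac_dvd t) hdvd
        rw [Nat.Coprime] at hco
        rw [hco] at hd
        have := Nat.le_of_dvd one_pos hd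
        omega
      have hstep := hgs.step hn hn0 hq hqm
      have heq : ((t : ℕ) : ℤ) * u = (P : ℤ) * ((s : ℤ) * u) := by
        rw [hs]; push_cast; ring
      rw [heq]
      exact hstep

theorem difference_set_lemma (A B : Finset ℤ)
    (hA : A ≠ {0}) (hB : B ≠ {0})
    (n : ℕ) (hn : n = A.card * B.card)
    (hcomplete : ∀ z : ZMod n,
      ∃! p : ℤ × ℤ, p.1 ∈ A ∧ p.2 ∈ B ∧ ((p.1 + p.2 : ℤ) : ZMod n) = z) :
    (∀ a₁ ∈ A, ∀ a₂ ∈ A, a₁ ≠ a₂ → ¬ IsCoprime (a₁ - a₂) (B.card : ℤ)) ∨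
    (∀ b₁ ∈ B, ∀ b₂ ∈ B, b₁ ≠ b₂ → ¬ IsCoprime (b₁ - b₂) (A.card : ℤ)) := by
  by_contra hcon
  push_neg at hcon
  obtain ⟨⟨a₁, ha₁, a₂, ha₂, hane, hacop⟩, ⟨b₁, hb₁, b₂, hb₂, hbne, hbcop⟩⟩ := hcon
  set m := A.card with hm
  set k := B.card with hk
  have hm2 : 2 ≤ m := Finset.one_lt_card.mpr ⟨a₁, ha₁, a₂, ha₂, hane⟩
  have hk2 : 2 ≤ k := Finset.one_lt_card.mpr ⟨b₁, hb₁, b₂, hb₂, hbne⟩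
  have hn0 : 0 < n := by rw [hn]; positivity
  set d : ℤ := a₁ - a₂ with hd
  set e : ℤ := b₁ - b₂ with he
  -- good multipliers
  have h00 : GoodUV A B n 1 1 := by
    intro z
    obtain ⟨q, hq, huniq⟩ := hcomplete z
    refine ⟨q, by simpa using hq, fun q' hq' => huniq q' (by simpa using hq')⟩
  -- t := (e % n).toNat
  have hmdvdn : (m : ℤ) ∣ (n : ℤ) := by rw [hn]; push_cast; exact Dvd.intro _ rfl
  have hkdvdn : (k : ℤ) ∣ (n : ℤ) := by rw [hn]; push_cast; exact Dvd.intro_left _ rfl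
  have hnZ : (0 : ℤ) < (n : ℤ) := by exact_mod_cast hn0
  have hmod_nonneg : ∀ x : ℤ, 0 ≤ x % (n : ℤ) := fun x => Int.emod_nonneg x hnZ.ne'
  have hmod_lt : ∀ x : ℤ, x % (n : ℤ) < (n : ℤ) := fun x => Int.emod_lt_of_pos x hnZ
  -- residues are coprime to the relevant cardinalities
  have hcop_mod : ∀ (x : ℤ) (c : ℕ), (c : ℤ) ∣ (n : ℤ) → IsCoprime x (c : ℤ) →
      IsCoprime (x % (n : ℤ)) (c : ℤ) := by
    intro x c hcd hcx
    obtain ⟨w, hw⟩ := hcd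
    have : x % (n : ℤ) = x + (c : ℤ) * (-(w * (x / (n : ℤ)))) := by
      rw [Int.emod_def, hw]; ring
    rw [this]
    exact hcx.add_mul_left_left _
  have hecop : IsCoprime (e % (n : ℤ)) (m : ℤ) := hcop_mod e m hmdvdn hbcop
  have hdcop : IsCoprime (d % (n : ℤ)) (k : ℤ) := hcop_mod d k hkdvdn hacop
  have hene0 : e % (n : ℤ) ≠ 0 := by
    intro h0
    rw [h0] at hecop
    have : IsUnit (m : ℤ) := (isCoprime_zero_left).mp hecop
    rw [Int.isUnit_iff] at this
    omega
  have hdne0 : d % (n : ℤ) ≠ 0 := by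
    intro h0
    rw [h0] at hdcop
    have : IsUnit (k : ℤ) := (isCoprime_zero_left).mp hdcop
    rw [Int.isUnit_iff] at this
    omega
  set t : ℕ := (e % (n : ℤ)).toNat with htdef
  set s : ℕ := (d % (n : ℤ)).toNat with hsdef
  have htZ : (t : ℤ) = e % (n : ℤ) := Int.toNat_of_nonneg (hmod_nonneg e)
  have hsZ : (s : ℤ) = d % (n : ℤ) := Int.toNat_of_nonneg (hmod_nonneg d)
  have ht0 : 0 < t := by
    rcases Nat.eq_zero_or_pos t with h0 | h0
    · exfalso; apply hene0; rw [← htZ, h0]; rfl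
    · exact h0
  have hs0 : 0 < s := by
    rcases Nat.eq_zero_or_pos s with h0 | h0
    · exfalso; apply hdne0; rw [← hsZ, h0]; rfl
    · exact h0
  have htcop : Nat.Coprime t m := by
    rw [Nat.coprime_iff_gcd_eq_one, ← Int.gcd_natCast_natCast, htZ]
    exact Int.isCoprime_iff_gcd_eq_one.mp hecop
  have hscop : Nat.Coprime s k := by
    rw [Nat.coprime_iff_gcd_eq_one, ← Int.gcd_natCast_natCast, hsZ]
    exact Int.isCoprime_iff_gcd_eq_one.mp hdcop
  -- build the twisted bijection
  have hg1 : GoodUV A B n ((t : ℤ) * 1) 1 := h00.mul hn hn0 t ht0 htcop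
  have hg2 : GoodUV B A n 1 (t : ℤ) := by simpa using hg1.swap
  have hn' : n = B.card * A.card := by rw [hn, Nat.mul_comm]
  have hg3 : GoodUV B A n ((s : ℤ) * 1) (t : ℤ) := hg2.mul hn' hn0 s hs0 hscop
  have hg4 : GoodUV A B n (t : ℤ) (s : ℤ) := by simpa using hg3.swap
  -- contradiction
  have hmt : (t : ℤ) ≡ e [ZMOD (n : ℕ)] := by
    rw [htZ]; exact Int.emod_emod_of_dvd e dvd_rfl
  have hms : (s : ℤ) ≡ d [ZMOD (n : ℕ)] := by
    rw [hsZ]; exact Int.emod_emod_of_dvd d dvd_rfl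
  have hmeq : (t : ℤ) * a₂ + (s : ℤ) * b₁ ≡ (t : ℤ) * a₁ + (s : ℤ) * b₂ [ZMOD (n : ℕ)] := by
    calc (t : ℤ) * a₂ + (s : ℤ) * b₁ ≡ e * a₂ + d * b₁ [ZMOD (n : ℕ)] :=
          Int.ModEq.add (hmt.mul_right a₂) (hms.mul_right b₁)
      _ = e * a₁ + d * b₂ := by rw [hd, he]; ring
      _ ≡ (t : ℤ) * a₁ + (s : ℤ) * b₂ [ZMOD (n : ℕ)] :=
          (Int.ModEq.add (hmt.mul_right a₁) (hms.mul_right b₂)).symm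
  have hz2 : (((t : ℤ) * a₂ + (s : ℤ) * b₁ : ℤ) : ZMod n)
      = (((t : ℤ) * a₁ + (s : ℤ) * b₂ : ℤ) : ZMod n) :=
    (ZMod.intCast_eq_intCast_iff _ _ _).mpr hmeq
  obtain ⟨q, hq, huniq⟩ := hg4 ((((t : ℤ) * a₁ + (s : ℤ) * b₂ : ℤ) : ZMod n))
  have e1 := huniq (a₁, b₂) ⟨ha₁, hb₂, rfl⟩
  have e2 := huniq (a₂, b₁) ⟨ha₂, hb₁, hz2⟩
  have e3 := e1.trans e2.symm
  rw [Prod.mk.injEq] at e3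
  exact hane e3.1
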